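/- Let n ≥ 4 (and char k = 0 or n ≤ char k, char k odd) and equip Sym^n(V)* with the unique (up to scalar) sl_2-equivariant symmetric bracket [ , ] : Sym^n(V)* × Sym^n(V)* → sl_2 with structure constants [s_i*, s_{n−i}*] = a_i H, [s_j*, s_{n−1−j}*] = b_j E_{12}, [s_k*, s_{n+1−k}*] = c_k E_{21}, where b_j = (−1)^j C(n−1,j) a. Then for v = α s_0* + β s_{n−1}* with α, β ≠ 0, one has [[v,v],v] = [2aαβ E_{12}, v] = −4aαβ² s_{n−2}* ≠ 0 (for a ≠ 0). Hence the odd Jacobi identity [[v,v],v] = 0 fails. -/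

import Mathlib

/-!
STATEMENT 10: Let `n ≥ 4` (with `char k = 0` or `n ≤ char k`, `char k` odd) and
equip `Sym^n(V)*` (basis `s₀*, …, s_n*`) with the `sl₂`-equivariant symmetric
bracket into `sl₂` with structure constants
`[s_i*, s_{n-i}*] = a_i H`, `[s_j*, s_{n-1-j}*] = b_j E₁₂`,
`[s_k*, s_{n+1-k}*] = c_k E₂₁`, where
`a_i = ((-1)^i/2)(C(n-1,i) - C(n-1,i-1)) a`, `b_j = (-1)^j C(n-1,j) a`,
`c_k = (-1)^k C(n-1,k-1) a`, and `[s_i*, s_{i'}*] = 0` when `i+i' ∉ {n, n±1}`.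
Then for `v = α s₀* + β s_{n-1}*` with `α, β ≠ 0` and `a ≠ 0`:
`[v,v] = 2aαβ E₁₂` and `[[v,v],v] = -4aαβ² s_{n-2}* ≠ 0`; hence the odd Jacobi
identity fails.

`Sym^n(V)*` is modelled by coordinates in the basis `(s_i*)`; `sl₂` acts by
`H·s_i* = (n-2i) s_i*`, `E₁₂·s_i* = -(n-i+1) s_{i-1}*`, `E₂₁·s_i* = -(i+1) s_{i+1}*`.
-/

namespace Stmt10

variable (k : Type*) [Field k] (n : ℕ)

def E12 : Matrix (Fin 2) (Fin 2) k := Matrix.single 0 1 1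
def E21 : Matrix (Fin 2) (Fin 2) k := Matrix.single 1 0 1
def H : Matrix (Fin 2) (Fin 2) k := Matrix.diagonal ![1, -1]

/-- The basis vector `s_i*` of `Sym^n(V)*`. -/
def s (i : Fin (n + 1)) : Fin (n + 1) → k := Pi.single i 1

/-- Action of `H` on `Sym^n(V)*`: `H·s_i* = (n-2i) s_i*`. -/
def Hact (v : Fin (n + 1) → k) : Fin (n + 1) → k :=
  fun i => ((n : k) - 2 * ((i : ℕ) : k)) * v i

/-- Action of `E₁₂` on `Sym^n(V)*`: `E₁₂·s_i* = -(n-i+1) s_{i-1}*`. -/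
def E12act (v : Fin (n + 1) → k) : Fin (n + 1) → k :=
  fun i => if h : (i : ℕ) + 1 ≤ n then
      -(((n - (i : ℕ) : ℕ)) : k) * v ⟨(i : ℕ) + 1, by omega⟩
    else 0

/-- Action of `E₂₁` on `Sym^n(V)*`: `E₂₁·s_i* = -(i+1) s_{i+1}*`. -/
def E21act (v : Fin (n + 1) → k) : Fin (n + 1) → k :=
  fun i => if h : 1 ≤ (i : ℕ) then
      -(((i : ℕ)) : k) * v ⟨(i : ℕ) - 1, by omega⟩
    else 0

/-- The action of a (trace-zero) `2 × 2` matrix `X = X₀₀ H + X₀₁ E₁₂ + X₁₀ E₂₁`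
on `Sym^n(V)*`. -/
def act (X : Matrix (Fin 2) (Fin 2) k) (v : Fin (n + 1) → k) : Fin (n + 1) → k :=
  X 0 0 • Hact k n v + X 0 1 • E12act k n v + X 1 0 • E21act k n v

/-- The structure constants `a_i`. -/
def aC (a : k) (i : ℕ) : k :=
  ((-1 : k) ^ i / 2) *
    (((n - 1).choose i : k) - (if i = 0 then 0 else ((n - 1).choose (i - 1) : k))) * a

/-- The structure constants `b_j`. -/
def bC (a : k) (j : ℕ) : k := (-1 : k) ^ j * ((n - 1).choose j : k) * a

/-- The structure constants `c_k`. -/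
def cC (a : k) (j : ℕ) : k := (-1 : k) ^ j * ((n - 1).choose (j - 1) : k) * a

end Stmt10

open Stmt10 in
theorem stmt10 (k : Type*) [Field k] (hk2 : ringChar k ≠ 2)
    (n : ℕ) (hn : 4 ≤ n) (hchar : ringChar k = 0 ∨ n ≤ ringChar k)
    (a : k) (ha : a ≠ 0) (α β : k) (hα : α ≠ 0) (hβ : β ≠ 0)
    (br : (Fin (n + 1) → k) → (Fin (n + 1) → k) → Matrix (Fin 2) (Fin 2) k)
    -- `br` is bilinear and symmetric
    (hadd₁ : ∀ x x' y, br (x + x') y = br x y + br x' y)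
    (hsmul₁ : ∀ (c : k) x y, br (c • x) y = c • br x y)
    (hsym : ∀ x y, br x y = br y x)
    -- structure constants
    (hH : ∀ i : Fin (n + 1),
      br (s k n i) (s k n ⟨n - (i : ℕ), by omega⟩) = aC k n a (i : ℕ) • H k)
    (hE12 : ∀ j : Fin (n + 1), (j : ℕ) ≤ n - 1 →
      br (s k n j) (s k n ⟨n - 1 - (j : ℕ), by omega⟩) = bC k n a (j : ℕ) • E12 k)
    (hE21 : ∀ j : Fin (n + 1), ∀ hj : 1 ≤ (j : ℕ),
      br (s k n j) (s k n ⟨n + 1 - (j : ℕ), by omega⟩) = cC k n a (j : ℕ) • E21 k)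
    (hzero : ∀ i i' : Fin (n + 1),
      (i : ℕ) + (i' : ℕ) ≠ n → (i : ℕ) + (i' : ℕ) ≠ n - 1 →
      (i : ℕ) + (i' : ℕ) ≠ n + 1 → br (s k n i) (s k n i') = 0) :
    ∀ v : Fin (n + 1) → k,
      v = α • s k n ⟨0, by omega⟩ + β • s k n ⟨n - 1, by omega⟩ →
        br v v = (2 * a * α * β) • E12 k ∧
        act k n (br v v) v = (-(4 * a * α * β ^ 2)) • s k n ⟨n - 2, by omega⟩ ∧
        act k n (br v v) v ≠ 0 := by
  intro v hv
  have h2 : (2 : k) ≠ 0 := Ring.two_ne_zero hk2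
  have hadd₂ : ∀ x y y', br x (y + y') = br x y + br x y' := by
    intro x y y'; rw [hsym, hadd₁, hsym y x, hsym y' x]
  have hsmul₂ : ∀ (c : k) x y, br x (c • y) = c • br x y := by
    intro c x y; rw [hsym, hsmul₁, hsym y x]
  set s0 : Fin (n + 1) := ⟨0, by omega⟩ with hs0
  set s1 : Fin (n + 1) := ⟨n - 1, by omega⟩ with hs1
  have h00 : br (s k n s0) (s k n s0) = 0 := by
    refine hzero s0 s0 ?_ ?_ ?_ <;> show (0 : ℕ) + 0 ≠ _ <;> omega
  have h11 : br (s k n s1) (s k n s1) = 0 := by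
    refine hzero s1 s1 ?_ ?_ ?_ <;> show n - 1 + (n - 1) ≠ _ <;> omega
  have h01 : br (s k n s0) (s k n s1) = a • E12 k := by
    have := hE12 s0 (by show (0:ℕ) ≤ n - 1; omega)
    have he : (⟨n - 1 - (s0 : ℕ), by omega⟩ : Fin (n + 1)) = s1 := by
      apply Fin.ext; show n - 1 - 0 = n - 1; omega
    rw [he] at this
    rw [this]
    simp [bC, hs0]
  have hbrvv : br v v = (2 * a * α * β) • E12 k := by
    rw [hv, hadd₁, hsmul₁, hsmul₁, hadd₂, hadd₂, hsmul₂, hsmul₂, hsmul₂, hsmul₂,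
      h00, h11, h01, hsym (s k n s1) (s k n s0), h01]
    simp only [smul_zero, smul_smul, zero_add, add_zero, ← add_smul]
    congr 1; ring
  have hact : act k n (br v v) v = (-(4 * a * α * β ^ 2)) • s k n ⟨n - 2, by omega⟩ := by
    rw [hbrvv]
    funext i
    simp only [act, E12, Matrix.smul_apply, Matrix.single, Pi.add_apply,
      Pi.smul_apply, smul_eq_mul, E12act, Hact, E21act, hv, s, Matrix.of_apply]
    norm_num
    simp only [Pi.single_apply, Fin.ext_iff, hs0, hs1]
    rcases Nat.lt_or_ge (i : ℕ) n with hi | hi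
    · rw [dif_pos (by omega : (i : ℕ) < n)]
      skip
      split_ifs <;>
        first
          | exact ‹False›.elim
          | (exfalso; omega)
          | ring1
          | (norm_num [show n - (i : ℕ) = 2 by omega]; ring1)
          | norm_num [show n - (i : ℕ) = 2 by omega]
    · rw [dif_neg (by omega)]
      skip
      split_ifs <;> first | exact ‹False›.elim | (exfalso; omega) | ring1
  refine ⟨hbrvv, hact, ?_⟩
  intro h0
  rw [hact] at h0
  have h1 := congrFun h0 ⟨n - 2, by omega⟩
  simp only [Pi.smul_apply, s, Pi.single_eq_same, smul_eq_mul, mul_one,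
    Pi.zero_apply, neg_eq_zero] at h1
  have h4 : (4 : k) ≠ 0 := by
    have : (4 : k) = 2 * 2 := by norm_num
    rw [this]; exact mul_ne_zero h2 h2
  exact mul_ne_zero (mul_ne_zero (mul_ne_zero h4 ha) hα) (pow_ne_zero 2 hβ) h1
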